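/- arXiv:2108.04995 — 2 statements merged into one kernel-verified Lean document; each statement's English description precedes it below -/
import Mathlib

section
/- The code C_TL = { {1,2,3}, {1,4,5}, {2,4,5}, {2,4,6}, {3,4,6}, {2,4}, {4,5}, {4,6}, {1}, {2}, {3}, ∅ } on 6 neurons is non-convex: for no dimension d does C_TL admit a realization in ℝ^d by convex open sets. (Every maximal codeword of C_TL has three elements, so its neural complex has dimension 2; thus C_TL is a non-convex 3-sparse code.) -/
namespace NeuralCode

/-- `USet U σ` is `U_σ = ⋂ i ∈ σ, U i` (the whole space when `σ = ∅`). -/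
def USet {ι : Type*} {d : ℕ} (U : ι → Set (EuclideanSpace ℝ (Fin d))) (σ : Finset ι) :
    Set (EuclideanSpace ℝ (Fin d)) :=
  ⋂ i ∈ σ, U i

/-- The atom of the codeword `c` in the family `U`. -/
def codeAtom {ι : Type*} {d : ℕ} (U : ι → Set (EuclideanSpace ℝ (Fin d))) (c : Finset ι) :
    Set (EuclideanSpace ℝ (Fin d)) :=
  USet U c \ ⋃ j ∉ c, U j

/-- The family `U` (of open sets) is a realization of the code `C`. -/
def IsRealization {ι : Type*} {d : ℕ} (C : Set (Finset ι))
    (U : ι → Set (EuclideanSpace ℝ (Fin d))) : Prop :=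
  (∀ i, IsOpen (U i)) ∧ ∀ c : Finset ι, c ∈ C ↔ (codeAtom U c).Nonempty

/-- The code `C` is convex: for some dimension `d` it admits a realization in `ℝ^d`
by convex open sets. -/
def IsConvexCode {ι : Type*} (C : Set (Finset ι)) : Prop :=
  ∃ (d : ℕ) (U : ι → Set (EuclideanSpace ℝ (Fin d))),
    IsRealization C U ∧ ∀ i, Convex ℝ (U i)

/-- The trunk of `σ` in `C`: the set of codewords containing `σ`. -/
def trunk {ι : Type*} (C : Set (Finset ι)) (σ : Finset ι) : Set (Finset ι) :=
  {c | c ∈ C ∧ σ ⊆ c}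

/-- The neural complex `Δ(C)` of `C`. -/
def neuralComplex {ι : Type*} (C : Set (Finset ι)) : Set (Finset ι) :=
  {σ | ∃ c ∈ C, σ ⊆ c}

/-- Condition W(i). -/
def WheelWi {ι : Type*} {d : ℕ} (U : ι → Set (EuclideanSpace ℝ (Fin d)))
    (σ1 σ2 σ3 : Finset ι) : Prop :=
  USet U σ1 ∩ USet U σ2 = USet U σ1 ∩ USet U σ2 ∩ USet U σ3 ∧
    USet U σ1 ∩ USet U σ3 = USet U σ1 ∩ USet U σ2 ∩ USet U σ3 ∧
    USet U σ2 ∩ USet U σ3 = USet U σ1 ∩ USet U σ2 ∩ USet U σ3 ∧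
    (USet U σ1 ∩ USet U σ2 ∩ USet U σ3).Nonempty

/-- Condition W(ii). -/
def WheelWii {ι : Type*} {d : ℕ} (U : ι → Set (EuclideanSpace ℝ (Fin d)))
    (σ1 σ2 σ3 τ : Finset ι) : Prop :=
  USet U σ1 ∩ USet U σ2 ∩ USet U σ3 ∩ USet U τ = ∅

/-- Condition W(iii). -/
def WheelWiii {ι : Type*} {d : ℕ} (U : ι → Set (EuclideanSpace ℝ (Fin d)))
    (σ1 σ2 σ3 τ : Finset ι) : Prop :=
  (Convex ℝ (USet U τ) ∧ Convex ℝ (USet U σ1 ∩ USet U τ) ∧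
      Convex ℝ (USet U σ2 ∩ USet U τ) ∧ Convex ℝ (USet U σ3 ∩ USet U τ)) →
    ∃ x ∈ USet U σ1 ∩ USet U τ, ∃ y ∈ USet U σ3 ∩ USet U τ,
      (segment ℝ x y ∩ (USet U σ2 ∩ USet U τ)).Nonempty

/-- Condition W(iii)◦. -/
def WheelWiiiCirc {ι : Type*} {d : ℕ} (U : ι → Set (EuclideanSpace ℝ (Fin d)))
    (σ1 σ2 σ3 τ : Finset ι) : Prop :=
  (USet U σ1 ∩ USet U τ).Nonempty ∧ (USet U σ2 ∩ USet U τ).Nonempty ∧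
    (USet U σ3 ∩ USet U τ).Nonempty

/-- `(σ1, σ2, σ3, τ)` is a wheel of the realization `U`. -/
def IsWheelOfRealization {ι : Type*} {d : ℕ} (U : ι → Set (EuclideanSpace ℝ (Fin d)))
    (σ1 σ2 σ3 τ : Finset ι) : Prop :=
  WheelWi U σ1 σ2 σ3 ∧ WheelWii U σ1 σ2 σ3 τ ∧ WheelWiii U σ1 σ2 σ3 τ

/-- Condition P(i). -/
def CondPi {ι : Type*} [DecidableEq ι] (C : Set (Finset ι)) (σ1 σ2 σ3 : Finset ι) : Prop :=
  σ1 ∪ σ2 ∪ σ3 ∈ neuralComplex C ∧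
    trunk C (σ1 ∪ σ2) = trunk C (σ1 ∪ σ2 ∪ σ3) ∧
    trunk C (σ1 ∪ σ3) = trunk C (σ1 ∪ σ2 ∪ σ3) ∧
    trunk C (σ2 ∪ σ3) = trunk C (σ1 ∪ σ2 ∪ σ3)

/-- Condition P(ii). -/
def CondPii {ι : Type*} [DecidableEq ι] (C : Set (Finset ι)) (σ1 σ2 σ3 τ : Finset ι) : Prop :=
  σ1 ∪ σ2 ∪ σ3 ∪ τ ∉ neuralComplex C

/-- Condition P(iii)◦. -/
def CondPiiiCirc {ι : Type*} [DecidableEq ι] (C : Set (Finset ι)) (σ1 σ2 σ3 τ : Finset ι) :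
    Prop :=
  σ1 ∪ τ ∈ neuralComplex C ∧ σ2 ∪ τ ∈ neuralComplex C ∧ σ3 ∪ τ ∈ neuralComplex C

/-- `(σ1, σ2, σ3, τ)` is a sprocket of `C`. -/
def IsSprocket {ι : Type*} [DecidableEq ι] (C : Set (Finset ι)) (σ1 σ2 σ3 τ : Finset ι) :
    Prop :=
  σ1 ∈ neuralComplex C ∧ σ2 ∈ neuralComplex C ∧ σ3 ∈ neuralComplex C ∧
    τ ∈ neuralComplex C ∧
    CondPi C σ1 σ2 σ3 ∧ CondPii C σ1 σ2 σ3 τ ∧ CondPiiiCirc C σ1 σ2 σ3 τ ∧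
    ∃ ρ1 ∈ neuralComplex C, ∃ ρ3 ∈ neuralComplex C,
      trunk C (σ1 ∪ τ) ⊆ trunk C ρ1 ∧ trunk C (σ3 ∪ τ) ⊆ trunk C ρ3 ∧
      trunk C τ ⊆ trunk C ρ1 ∪ trunk C ρ3 ∧
      trunk C (ρ1 ∪ ρ3 ∪ τ) ⊆ trunk C σ2

/-- `F` is a facet of `Δ(C)`: an inclusion-maximal codeword of `C`. -/
def IsFacet {ι : Type*} (C : Set (Finset ι)) (F : Finset ι) : Prop :=
  F ∈ C ∧ ∀ c ∈ C, F ⊆ c → c = F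

/-- `τ` is a max-intersection face of `Δ(C)`: a face equal to the intersection of two or
more distinct facets. -/
def IsMaxIntersectionFace {ι : Type*} [DecidableEq ι] [Fintype ι] (C : Set (Finset ι))
    (τ : Finset ι) : Prop :=
  τ ∈ neuralComplex C ∧
    ∃ S : Finset (Finset ι), 2 ≤ S.card ∧ (∀ F ∈ S, IsFacet C F) ∧ τ = S.inf id

/-- The link graph of `τ` in `Δ(C)`. -/
def linkGraph {ι : Type*} [DecidableEq ι] (C : Set (Finset ι)) (τ : Finset ι) :
    SimpleGraph {i : ι // i ∉ τ ∧ insert i τ ∈ neuralComplex C} where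
  Adj a b := a ≠ b ∧ τ ∪ {(a : ι), (b : ι)} ∈ neuralComplex C
  symm := ⟨fun a b h => ⟨h.1.symm, by rw [Finset.pair_comm]; exact h.2⟩⟩
  loopless := ⟨fun a h => h.1 rfl⟩

/-- `(σ1, σ2, σ3, τ)` is a wire wheel of `C`. -/
def IsWireWheel {ι : Type*} [DecidableEq ι] (C : Set (Finset ι)) (σ1 σ2 σ3 τ : Finset ι) :
    Prop :=
  σ1 ∈ neuralComplex C ∧ σ2 ∈ neuralComplex C ∧ σ3 ∈ neuralComplex C ∧
    τ ∈ neuralComplex C ∧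
    CondPi C σ1 σ2 σ3 ∧ CondPii C σ1 σ2 σ3 τ ∧ τ ∉ C ∧
    (∀ ω : Finset ι, ω.card = 3 → Disjoint ω τ → τ ∪ ω ∉ neuralComplex C) ∧
    (linkGraph C τ).IsTree ∧
    ∃ v1 v2 v3 : {i : ι // i ∉ τ ∧ insert i τ ∈ neuralComplex C},
      σ1 \ τ = {(v1 : ι)} ∧ σ2 \ τ = {(v2 : ι)} ∧ σ3 \ τ = {(v3 : ι)} ∧
      ∀ p : (linkGraph C τ).Walk v1 v3, p.IsPath → v2 ∈ p.support

/-- `(σ1, σ3, τ)` is a wheel frame of `C`. -/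
def IsWheelFrame {ι : Type*} [DecidableEq ι] (C : Set (Finset ι)) (σ1 σ3 τ : Finset ι) :
    Prop :=
  σ1 ∈ neuralComplex C ∧ σ3 ∈ neuralComplex C ∧ τ ∈ neuralComplex C ∧
    (σ1 ∪ σ3 ∈ neuralComplex C ∧
      ∀ ω : Finset ι, ω ⊆ σ1 ∪ σ3 → ¬ω ⊆ σ1 → ¬ω ⊆ σ3 → ω ∪ τ ∈ neuralComplex C →
        trunk C (σ1 ∪ ω) = trunk C (σ1 ∪ σ3) ∧ trunk C (σ3 ∪ ω) = trunk C (σ1 ∪ σ3)) ∧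
    τ ∪ σ1 ∪ σ3 ∉ neuralComplex C ∧
    σ1 ∪ τ ∈ neuralComplex C ∧ σ3 ∪ τ ∈ neuralComplex C ∧
    σ1 ∩ σ3 = ∅ ∧
    trunk C τ ⊆ ⋃ i ∈ (σ1 ∪ σ3 : Finset ι), trunk C {i}

/-- A subset of `ℝ^d` is top-dimensional: every nonempty intersection with an open set
has nonempty interior. -/
def TopDimensional {d : ℕ} (S : Set (EuclideanSpace ℝ (Fin d))) : Prop :=
  ∀ O : Set (EuclideanSpace ℝ (Fin d)), IsOpen O → (S ∩ O).Nonempty →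
    (interior (S ∩ O)).Nonempty

/-- A realization is top-dimensional if each of its atoms is empty or top-dimensional. -/
def IsTopDimRealization {ι : Type*} {d : ℕ} (U : ι → Set (EuclideanSpace ℝ (Fin d))) :
    Prop :=
  ∀ c : Finset ι, codeAtom U c = ∅ ∨ TopDimensional (codeAtom U c)

/-- `C` is top-dimensionally convex. -/
def IsTopDimConvexCode {ι : Type*} (C : Set (Finset ι)) : Prop :=
  ∃ (d : ℕ) (U : ι → Set (EuclideanSpace ℝ (Fin d))),
    IsRealization C U ∧ IsTopDimRealization U ∧ ∀ i, Convex ℝ (U i)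

/-- The restriction `C|_χ = {c ∩ χ : c ∈ C}`, as a code on the neuron set `χ`. -/
def restrictCode {ι : Type*} [DecidableEq ι] (C : Set (Finset ι)) (χ : Finset ι) :
    Set (Finset {i : ι // i ∈ χ}) :=
  (fun c => c.subtype (· ∈ χ)) '' C

/-- Neuron `j` is trivial in `C`: no codeword contains it. -/
def TrivialNeuron {ι : Type*} (C : Set (Finset ι)) (j : ι) : Prop :=
  ∀ c ∈ C, j ∉ c

/-- Neuron `j` is redundant in `C`. -/
def RedundantNeuron {ι : Type*} [DecidableEq ι] (C : Set (Finset ι)) (j : ι) : Prop :=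
  ¬TrivialNeuron C j ∧ ∃ σ : Finset ι, j ∉ σ ∧ trunk C {j} = trunk C σ

/-- `C` is decomposable with embedded part supported on `φ`. -/
def IsDecomposable {ι : Type*} [DecidableEq ι] [Fintype ι] (C : Set (Finset ι))
    (φ : Finset ι) : Prop :=
  φ ≠ ∅ ∧ φ ≠ Finset.univ ∧
    ∃ ψ : Finset ι, Disjoint φ ψ ∧ ψ ≠ Finset.univ ∧ ψ ∈ C ∧
      ∀ c ∈ C, (c ∩ φ).Nonempty → ∃ φ' ⊆ φ, c = φ' ∪ ψ

end NeuralCode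

open NeuralCode

/-- The code `C_TL` (with neurons `1,…,6` encoded as `0,…,5` in `Fin 6`). -/
def codeTL : Set (Finset (Fin 6)) :=
  {{0, 1, 2}, {0, 3, 4}, {1, 3, 4}, {1, 3, 5}, {2, 3, 5}, {1, 3}, {3, 4}, {3, 5},
    {0}, {1}, {2}, ∅}


set_option maxHeartbeats 1000000 in

lemma wheel_contradiction {E : Type*} [NormedAddCommGroup E] [NormedSpace ℝ E]
    {X1 X2 X3 T : Set E}
    (hX1o : IsOpen X1) (hX2o : IsOpen X2) (hX3o : IsOpen X3) (hTo : IsOpen T)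
    (hX1c : Convex ℝ X1) (hX2c : Convex ℝ X2) (hX3c : Convex ℝ X3)
    (h12 : ∀ ⦃q⦄, q ∈ X1 → q ∈ X2 → q ∈ X3)
    (h23 : ∀ ⦃q⦄, q ∈ X2 → q ∈ X3 → q ∈ X1)
    (hdisj : ∀ ⦃q⦄, q ∈ X1 → q ∈ X2 → q ∈ X3 → q ∈ T → False)
    {p x y : E} {σ : ℝ} (hσ0 : 0 ≤ σ) (hσ1 : σ ≤ 1)
    (hp1 : p ∈ X1) (hp2 : p ∈ X2) (hp3 : p ∈ X3)
    (hx1 : x ∈ X1) (hxT : x ∈ T)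
    (hy3 : y ∈ X3) (hyT : y ∈ T)
    (hz2 : (1-σ) • x + σ • y ∈ X2) (hzT : (1-σ) • x + σ • y ∈ T) : False := by
  set z : E := (1-σ) • x + σ • y with hzdef
  rcases eq_or_lt_of_le hσ1 with hσe | hσlt
  · have hzy : z = y := by rw [hzdef, hσe]; simp
    have hz3 : z ∈ X3 := hzy ▸ hy3
    exact hdisj (h23 hz2 hz3) hz2 hz3 hzT
  set C : Set E := X1 ∩ X2 ∩ X3 with hC
  have hCc : Convex ℝ C := (hX1c.inter hX2c).inter hX3c
  have hCo : IsOpen C := (hX1o.inter hX2o).inter hX3o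
  have hpC : p ∈ C := ⟨⟨hp1, hp2⟩, hp3⟩
  set l : ℝ → E := fun t => p + t • (z - p) with hl
  have hlcont : Continuous l := continuous_const.add (continuous_id.smul continuous_const)
  set J : Set ℝ := l ⁻¹' C with hJ
  have hJo : IsOpen J := hCo.preimage hlcont
  have hJc : Convex ℝ J := by
    intro ta hta tb htb a b ha hb hab
    have hkey : l (a * ta + b * tb) = a • l ta + b • l tb := by
      simp only [hl]
      have hb' : b = 1 - a := by linarith
      subst hb'
      match_scalars <;> ring
    show l (a • ta + b • tb) ∈ C
    rw [smul_eq_mul, smul_eq_mul, hkey]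
    exact hCc hta htb ha hb hab
  have h0J : (0:ℝ) ∈ J := by
    show l 0 ∈ C
    simp only [hl, zero_smul, add_zero]
    exact hpC
  have h1J : (1:ℝ) ∉ J := by
    intro h
    have hl1 : l 1 = z := by simp [hl]
    have hzC : z ∈ C := by rwa [hJ, Set.mem_preimage, hl1] at h
    exact hdisj hzC.1.1 hzC.1.2 hzC.2 hzT
  have hJsub : J ⊆ Set.Iio 1 := by
    intro t ht
    by_contra hlt
    simp only [Set.mem_Iio, not_lt] at hlt
    rcases eq_or_lt_of_le hlt with h | h
    · exact h1J (h ▸ ht)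
    · have ht0 : (0:ℝ) < t := by linarith
      have h1 : (1:ℝ) ∈ J := by
        have h1t : (1:ℝ) = (1 - 1/t) • (0:ℝ) + (1/t) • t := by
          field_simp
          simp [ht0.ne']
        rw [h1t]
        refine hJc h0J ht ?_ (by positivity) (by ring)
        have : 1/t ≤ 1 := by
          rw [div_le_one ht0]; linarith
        linarith
      exact h1J h1
  have hJbdd : BddAbove J := ⟨1, fun t ht => le_of_lt (hJsub ht)⟩
  set β : ℝ := sSup J with hβ
  have hβ0 : 0 ≤ β := le_csSup hJbdd h0J
  have hβ1 : β ≤ 1 := csSup_le ⟨0, h0J⟩ fun t ht => (hJsub ht).le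
  set m : E := l β with hm
  have hmcl : m ∈ closure C := by
    have hβcl : β ∈ closure J := (isLUB_csSup ⟨0, h0J⟩ hJbdd).mem_closure ⟨0, h0J⟩
    exact hlcont.closure_preimage_subset C hβcl
  have hβne : β ∉ J := by
    intro h
    obtain ⟨ε, hε, hballJ⟩ := Metric.isOpen_iff.mp hJo β h
    have hmem : β + ε/2 ∈ J := by
      apply hballJ
      rw [Metric.mem_ball, Real.dist_eq, add_sub_cancel_left, abs_of_pos (by linarith)]
      linarith
    linarith [le_csSup hJbdd hmem]
  have hβlt : β < 1 := by
    rcases lt_or_eq_of_le hβ1 with h | h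
    · exact h
    · exfalso
      have hmz : m = z := by rw [hm, h]; simp [hl]
      have hzcl : z ∈ closure C := hmz ▸ hmcl
      obtain ⟨q, hqT, hqC⟩ := mem_closure_iff.mp hzcl T hTo hzT
      exact hdisj hqC.1.1 hqC.1.2 hqC.2 hqT
  have hmX2 : m ∈ X2 := by
    have hm2 : m = (1-β) • p + β • z := by
      simp only [hm, hl]; match_scalars <;> ring
    rw [hm2]
    exact hX2c hp2 hz2 (by linarith) hβ0 (by ring)
  obtain ⟨ρ, hρ, hballm⟩ := Metric.isOpen_iff.mp hX2o m hmX2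
  have hmclX1 : m ∈ closure X1 := closure_mono (fun q hq => hq.1.1) hmcl
  have hσd : (0:ℝ) < 1 - σ := by linarith
  set K : ℝ := ‖x - m‖ + (σ/(1-σ)) * ‖y - m‖ + 1 with hK
  have hKpos : 0 < K := by
    have h1 : 0 ≤ σ/(1-σ) := div_nonneg hσ0 (le_of_lt hσd)
    positivity
  set s : ℝ := min (1/2) (ρ/(2*K)) with hs
  have hspos : 0 < s := lt_min (by norm_num) (by positivity)
  have hs1 : s < 1 := lt_of_le_of_lt (min_le_left _ _) (by norm_num)
  have hsK : s * K ≤ ρ/2 := by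
    have : s ≤ ρ/(2*K) := min_le_right _ _
    calc s * K ≤ (ρ/(2*K)) * K := mul_le_mul_of_nonneg_right this hKpos.le
    _ = ρ/2 := by field_simp
  set xs : E := (1-s) • m + s • x with hxs
  have hxsX1 : xs ∈ X1 := by
    have hseg : xs ∈ openSegment ℝ x m :=
      ⟨s, 1-s, hspos, by linarith, by ring, by rw [hxs]; abel⟩
    have := hX1c.openSegment_interior_closure_subset_interior
      (by rwa [hX1o.interior_eq]) hmclX1 hseg
    rwa [hX1o.interior_eq] at this
  have hxsm : xs - m = s • (x - m) := by
    rw [hxs]; match_scalars <;> ring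
  have hxm_le : ‖x - m‖ ≤ K := by
    have h1 : 0 ≤ (σ/(1-σ)) * ‖y - m‖ := by
      have := div_nonneg hσ0 (le_of_lt hσd); positivity
    rw [hK]; linarith
  have hxsball : xs ∈ Metric.ball m ρ := by
    rw [Metric.mem_ball, dist_eq_norm, hxsm, norm_smul, Real.norm_of_nonneg hspos.le]
    calc s * ‖x - m‖ ≤ s * K := by nlinarith
    _ ≤ ρ/2 := hsK
    _ < ρ := by linarith
  have hxsX2 : xs ∈ X2 := hballm hxsball
  have hxsC : xs ∈ C := ⟨⟨hxsX1, hxsX2⟩, h12 hxsX1 hxsX2⟩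
  set D : ℝ := 1 - σ + s*σ with hD
  have hDpos : 0 < D := by nlinarith
  set u : ℝ := s*σ/D with hu
  have hu0 : 0 ≤ u := div_nonneg (by positivity) hDpos.le
  have hu1 : u ≤ 1 := by
    rw [hu, div_le_one hDpos]; linarith
  set c3 : E := (1-u) • xs + u • y with hc3
  have hc3X3 : c3 ∈ X3 := hX3c hxsC.2 hy3 (by linarith) hu0 (by ring)
  clear_value z C l J β m K s xs D u c3
  have hDne : D ≠ 0 := ne_of_gt hDpos
  have hq1 : 0 ≤ σ/(1-σ) := div_nonneg hσ0 hσd.le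
  have hu_le : u ≤ s * (σ/(1-σ)) := by
    have h1 : 1 - σ ≤ D := by nlinarith
    have h2 : s*σ/D ≤ s*σ/(1-σ) := by
      apply div_le_div_of_nonneg_left (by positivity) hσd h1
    calc u = s*σ/D := hu
    _ ≤ s*σ/(1-σ) := h2
    _ = s * (σ/(1-σ)) := by ring
  have hc3ball : c3 ∈ Metric.ball m ρ := by
    have hdiff : c3 - m = (1-u) • (xs - m) + u • (y - m) := by
      rw [hc3, hxs]; match_scalars <;> ring
    rw [Metric.mem_ball, dist_eq_norm, hdiff]
    have h2 : ‖xs - m‖ = s * ‖x - m‖ := by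
      rw [hxsm, norm_smul, Real.norm_of_nonneg hspos.le]
    have h1 : ‖(1-u) • (xs - m) + u • (y - m)‖
        ≤ (1-u) * (s * ‖x - m‖) + u * ‖y - m‖ := by
      calc ‖(1-u) • (xs - m) + u • (y - m)‖
          ≤ ‖(1-u) • (xs - m)‖ + ‖u • (y - m)‖ := norm_add_le _ _
      _ = (1-u) * (s * ‖x - m‖) + u * ‖y - m‖ := by
          rw [norm_smul, norm_smul, Real.norm_of_nonneg (by linarith : (0:ℝ) ≤ 1-u),
            Real.norm_of_nonneg hu0, h2]
    have h3 : (1-u) * (s * ‖x - m‖) + u * ‖y - m‖ ≤ s * K := by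
      have e1 : (1-u) * (s * ‖x - m‖) ≤ s * ‖x - m‖ := by
        have : 0 ≤ s * ‖x - m‖ := by positivity
        nlinarith
      have e2 : u * ‖y - m‖ ≤ s * (σ/(1-σ)) * ‖y - m‖ := by
        have := norm_nonneg (y - m)
        nlinarith
      have e3 : s * ‖x - m‖ + s * (σ/(1-σ)) * ‖y - m‖ ≤ s * K := by
        rw [hK]; nlinarith [norm_nonneg (x - m), norm_nonneg (y - m)]
      linarith
    calc ‖(1-u) • (xs - m) + u • (y - m)‖ ≤ s * K := le_trans h1 h3
    _ ≤ ρ/2 := hsK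
    _ < ρ := by linarith
  have hc3X2 : c3 ∈ X2 := hballm hc3ball
  have hc3C : c3 ∈ C := by
    rw [hC]; exact ⟨⟨h23 hc3X2 hc3X3, hc3X2⟩, hc3X3⟩
  set t3 : ℝ := ((1-σ)*(1-s)*β + s)/D with ht3
  have hident : l t3 = c3 := by
    rw [hc3, hxs, hm]
    simp only [hl, hzdef, hu, ht3, hD]
    match_scalars <;> field_simp <;> ring
  have ht3J : t3 ∈ J := by
    rw [hJ, Set.mem_preimage, hident]
    exact hc3C
  have hle : t3 ≤ β := by rw [hβ]; exact le_csSup hJbdd ht3J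
  have hgt : β < t3 := by
    rw [ht3, lt_div_iff₀ hDpos, hD]
    nlinarith [mul_pos hspos (sub_pos.mpr hβlt)]
  linarith

private lemma codeTL_cases {c : Finset (Fin 6)} (hc : c ∈ codeTL) :
    c = {0,1,2} ∨ c = {0,3,4} ∨ c = {1,3,4} ∨ c = {1,3,5} ∨ c = {2,3,5} ∨
    c = {1,3} ∨ c = {3,4} ∨ c = {3,5} ∨ c = {0} ∨ c = {1} ∨ c = {2} ∨ c = ∅ := by
  simpa [codeTL, Set.mem_insert_iff, Set.mem_singleton_iff] using hc

private lemma mem012 {c : Finset (Fin 6)} (hc : c ∈ codeTL) (h0 : (0:Fin 6) ∈ c)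
    (h1 : (1:Fin 6) ∈ c) : (2:Fin 6) ∈ c := by
  rcases codeTL_cases hc with rfl|rfl|rfl|rfl|rfl|rfl|rfl|rfl|rfl|rfl|rfl|rfl <;>
    revert h0 h1 <;> decide

private lemma mem120 {c : Finset (Fin 6)} (hc : c ∈ codeTL) (h1 : (1:Fin 6) ∈ c)
    (h2 : (2:Fin 6) ∈ c) : (0:Fin 6) ∈ c := by
  rcases codeTL_cases hc with rfl|rfl|rfl|rfl|rfl|rfl|rfl|rfl|rfl|rfl|rfl|rfl <;>
    revert h1 h2 <;> decide

private lemma not0123 {c : Finset (Fin 6)} (hc : c ∈ codeTL) (h0 : (0:Fin 6) ∈ c)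
    (h1 : (1:Fin 6) ∈ c) (h2 : (2:Fin 6) ∈ c) : (3:Fin 6) ∉ c := by
  rcases codeTL_cases hc with rfl|rfl|rfl|rfl|rfl|rfl|rfl|rfl|rfl|rfl|rfl|rfl <;>
    revert h0 h1 h2 <;> decide

private lemma not45 {c : Finset (Fin 6)} (hc : c ∈ codeTL) (h4 : (4:Fin 6) ∈ c) :
    (5:Fin 6) ∉ c := by
  rcases codeTL_cases hc with rfl|rfl|rfl|rfl|rfl|rfl|rfl|rfl|rfl|rfl|rfl|rfl <;>
    revert h4 <;> decide

private lemma mem3451 {c : Finset (Fin 6)} (hc : c ∈ codeTL) (h3 : (3:Fin 6) ∈ c)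
    (h4 : (4:Fin 6) ∉ c) (h5 : (5:Fin 6) ∉ c) : (1:Fin 6) ∈ c := by
  rcases codeTL_cases hc with rfl|rfl|rfl|rfl|rfl|rfl|rfl|rfl|rfl|rfl|rfl|rfl <;>
    revert h3 h4 h5 <;> decide


/-- the code `C_TL` is non-convex. -/
theorem codeTL_nonconvex : ¬IsConvexCode codeTL := by
  rintro ⟨d, U, ⟨hUo, hatom⟩, hUc⟩
  classical
  let cw : EuclideanSpace ℝ (Fin d) → Finset (Fin 6) :=
    fun q => Finset.univ.filter (fun i => q ∈ U i)
  have hcw_mem : ∀ q i, i ∈ cw q ↔ q ∈ U i := by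
    intro q i; simp [cw]
  have hcwC : ∀ q, cw q ∈ codeTL := by
    intro q
    refine (hatom (cw q)).mpr ⟨q, ?_, ?_⟩
    · simp only [USet, Set.mem_iInter]
      exact fun i hi => (hcw_mem q i).mp hi
    · intro hq
      simp only [Set.mem_iUnion] at hq
      obtain ⟨j, hj, hqj⟩ := hq
      exact hj ((hcw_mem q j).mpr hqj)
  have hpoint : ∀ c : Finset (Fin 6), c ∈ codeTL → ∃ q, ∀ i ∈ c, q ∈ U i := by
    intro c hc
    obtain ⟨q, hq1, -⟩ := (hatom c).mp hc
    simp only [USet, Set.mem_iInter] at hq1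
    exact ⟨q, hq1⟩
  have f012 : ∀ ⦃q⦄, q ∈ U 0 → q ∈ U 1 → q ∈ U 2 := fun q h0 h1 =>
    (hcw_mem q 2).mp (mem012 (hcwC q) ((hcw_mem q 0).mpr h0) ((hcw_mem q 1).mpr h1))
  have f120 : ∀ ⦃q⦄, q ∈ U 1 → q ∈ U 2 → q ∈ U 0 := fun q h1 h2 =>
    (hcw_mem q 0).mp (mem120 (hcwC q) ((hcw_mem q 1).mpr h1) ((hcw_mem q 2).mpr h2))
  have fdisj : ∀ ⦃q⦄, q ∈ U 0 → q ∈ U 1 → q ∈ U 2 → q ∈ U 3 → False := fun q h0 h1 h2 h3 =>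
    not0123 (hcwC q) ((hcw_mem q 0).mpr h0) ((hcw_mem q 1).mpr h1)
      ((hcw_mem q 2).mpr h2) ((hcw_mem q 3).mpr h3)
  have f45 : ∀ q, q ∈ U 4 → q ∈ U 5 → False := fun q h4 h5 =>
    not45 (hcwC q) ((hcw_mem q 4).mpr h4) ((hcw_mem q 5).mpr h5)
  have f1 : ∀ q, q ∈ U 3 → q ∉ U 4 → q ∉ U 5 → q ∈ U 1 := fun q h3 h4 h5 =>
    (hcw_mem q 1).mp (mem3451 (hcwC q) ((hcw_mem q 3).mpr h3)
      (fun h => h4 ((hcw_mem q 4).mp h)) (fun h => h5 ((hcw_mem q 5).mp h)))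
  obtain ⟨p, hp⟩ := hpoint {0,1,2} (by simp [codeTL])
  obtain ⟨x, hx⟩ := hpoint {0,3,4} (by simp [codeTL])
  obtain ⟨y, hy⟩ := hpoint {2,3,5} (by simp [codeTL])
  have hp0 : p ∈ U 0 := hp 0 (by decide)
  have hp1 : p ∈ U 1 := hp 1 (by decide)
  have hp2 : p ∈ U 2 := hp 2 (by decide)
  have hx0 : x ∈ U 0 := hx 0 (by decide)
  have hx3 : x ∈ U 3 := hx 3 (by decide)
  have hx4 : x ∈ U 4 := hx 4 (by decide)
  have hy2 : y ∈ U 2 := hy 2 (by decide)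
  have hy3 : y ∈ U 3 := hy 3 (by decide)
  have hy5 : y ∈ U 5 := hy 5 (by decide)
  set g : ℝ → EuclideanSpace ℝ (Fin d) := fun t => (1-t) • x + t • y with hg
  have hgc : Continuous g := by
    apply Continuous.add
    · exact (continuous_const.sub continuous_id).smul continuous_const
    · exact continuous_id.smul continuous_const
  have hg3 : ∀ t ∈ Set.Icc (0:ℝ) 1, g t ∈ U 3 := fun t ht =>
    (hUc 3) hx3 hy3 (by linarith [ht.2]) ht.1 (by ring)
  obtain ⟨t0, ht0, hw4, hw5⟩ : ∃ t0 ∈ Set.Icc (0:ℝ) 1, g t0 ∉ U 4 ∧ g t0 ∉ U 5 := by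
    by_contra hcon
    push_neg at hcon
    obtain ⟨t, htI, ht4, ht5⟩ := isPreconnected_Icc (g ⁻¹' (U 4)) (g ⁻¹' (U 5))
      ((hUo 4).preimage hgc) ((hUo 5).preimage hgc)
      (fun t ht => by
        by_cases h4 : g t ∈ U 4
        · exact Or.inl h4
        · exact Or.inr (hcon t ht h4))
      ⟨0, ⟨le_refl 0, by norm_num⟩, by simpa [hg] using hx4⟩
      ⟨1, ⟨by norm_num, le_refl 1⟩, by simpa [hg] using hy5⟩
    exact f45 (g t) ht4 ht5
  have hw3 : (1-t0) • x + t0 • y ∈ U 3 := hg3 t0 ht0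
  have hw1 : (1-t0) • x + t0 • y ∈ U 1 := by
    refine f1 _ hw3 ?_ ?_
    · simpa [hg] using hw4
    · simpa [hg] using hw5
  exact wheel_contradiction (hUo 0) (hUo 1) (hUo 2) (hUo 3)
    (hUc 0) (hUc 1) (hUc 2) f012 f120 fdisj ht0.1 ht0.2
    hp0 hp1 hp2 hx0 hx3 hy2 hy3 hw1 hw3
end

section
/- Let C be a code on n neurons and suppose the neuron j is trivial or redundant in C. Then C is convex if and only if the restricted code C|_{[n] ∖ {j}}, regarded as a code on the neuron set [n] ∖ {j}, is convex. -/
open NeuralCode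

lemma mem_codeAtom_iff' {ι : Type*} {d : ℕ} (U : ι → Set (EuclideanSpace ℝ (Fin d)))
    (c : Finset ι) (x : EuclideanSpace ℝ (Fin d)) :
    x ∈ codeAtom U c ↔ ∀ i, x ∈ U i ↔ i ∈ c := by
  simp only [codeAtom, USet, Set.mem_diff, Set.mem_iInter, Set.mem_iUnion, not_exists]
  constructor
  · rintro ⟨h1, h2⟩ i
    exact ⟨fun hx => by by_contra hic; exact h2 i hic hx, h1 i⟩
  · intro h
    exact ⟨fun i hi => (h i).2 hi, fun i hi hx => hi ((h i).1 hx)⟩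

lemma convex_of_restrict_aux {n : ℕ} (C : Set (Finset (Fin n))) (j : Fin n)
    {d : ℕ} (V : {i : Fin n // i ∈ ({j}ᶜ : Finset (Fin n))} → Set (EuclideanSpace ℝ (Fin d)))
    (hVopen : ∀ i, IsOpen (V i)) (hVconv : ∀ i, Convex ℝ (V i))
    (hV : ∀ c', c' ∈ restrictCode C ({j}ᶜ) ↔ (codeAtom V c').Nonempty)
    (W : Set (EuclideanSpace ℝ (Fin d))) (hWopen : IsOpen W) (hWconv : Convex ℝ W)
    (R : Finset {i : Fin n // i ∈ ({j}ᶜ : Finset (Fin n))} → Prop)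
    (hWR : ∀ x c', (∀ i, x ∈ V i ↔ i ∈ c') → (x ∈ W ↔ R c'))
    (hkey : ∀ c ∈ C, (j ∈ c ↔ R (c.subtype (· ∈ ({j}ᶜ : Finset (Fin n)))))) :
    IsConvexCode C := by
  classical
  refine ⟨d, fun i => if h : i = j then W
      else V ⟨i, Finset.mem_compl.mpr (fun hm => h (Finset.mem_singleton.mp hm))⟩,
    ⟨?_, ?_⟩, ?_⟩
  · intro i; dsimp only; split_ifs with h
    · exact hWopen
    · exact hVopen _
  · intro c
    constructor
    · intro hc
      obtain ⟨x, hx⟩ := (hV _).mp ⟨c, hc, rfl⟩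
      rw [mem_codeAtom_iff'] at hx
      refine ⟨x, (mem_codeAtom_iff' _ _ _).2 fun i => ?_⟩
      by_cases h : i = j
      · subst h
        rw [dif_pos rfl, hWR x _ hx]
        exact (hkey c hc).symm
      · rw [dif_neg h]
        exact (hx _).trans Finset.mem_subtype
    · rintro ⟨x, hx⟩
      rw [mem_codeAtom_iff'] at hx
      have hxV : ∀ i : {i : Fin n // i ∈ ({j}ᶜ : Finset (Fin n))},
          x ∈ V i ↔ i ∈ c.subtype (· ∈ ({j}ᶜ : Finset (Fin n))) := by
        intro i
        have hij : (i : Fin n) ≠ j := fun h =>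
          (Finset.mem_compl.mp i.2) (Finset.mem_singleton.mpr h)
        have h2 := hx (i : Fin n)
        rw [dif_neg hij] at h2
        rw [Finset.mem_subtype]
        exact h2
      obtain ⟨c₂, hc₂, hsub⟩ := (hV _).mpr ⟨x, (mem_codeAtom_iff' _ _ _).2 hxV⟩
      have hWx : x ∈ W ↔ R (c.subtype (· ∈ ({j}ᶜ : Finset (Fin n)))) := hWR x _ hxV
      have hjc : j ∈ c ↔ x ∈ W := by
        have := hx j
        rw [dif_pos rfl] at this
        exact this.symm
      have hj2 : j ∈ c₂ ↔ R (c.subtype (· ∈ ({j}ᶜ : Finset (Fin n)))) := by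
        rw [hkey c₂ hc₂]
        exact iff_of_eq (congrArg R hsub)
      have hce : c = c₂ := by
        ext i
        by_cases h : i = j
        · subst h; rw [hjc, hWx, ← hj2]
        · have hiχ : i ∈ ({j}ᶜ : Finset (Fin n)) :=
            Finset.mem_compl.mpr (fun hm => h (Finset.mem_singleton.mp hm))
          have := Finset.ext_iff.mp hsub ⟨i, hiχ⟩
          rw [Finset.mem_subtype, Finset.mem_subtype] at this
          exact this.symm
      rw [hce]; exact hc₂
  · intro i; dsimp only; split_ifs with h
    · exact hWconv
    · exact hVconv _

/-- deleting a trivial or redundant neuron does not affect convexity. -/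
theorem trivial_or_redundant_convex_iff {n : ℕ} (C : Set (Finset (Fin n))) (j : Fin n)
    (hj : TrivialNeuron C j ∨ RedundantNeuron C j) :
    IsConvexCode C ↔ IsConvexCode (restrictCode C ({j}ᶜ)) := by
  classical
  constructor
  · rintro ⟨d, U, ⟨hUopen, hU⟩, hUconv⟩
    refine ⟨d, fun i => U i.val, ⟨fun i => hUopen i.val, fun c' => ?_⟩, fun i => hUconv i.val⟩
    constructor
    · rintro ⟨c, hc, rfl⟩
      obtain ⟨x, hx⟩ := (hU c).1 hc
      rw [mem_codeAtom_iff'] at hx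
      exact ⟨x, (mem_codeAtom_iff' _ _ _).2 fun i => (hx i.val).trans Finset.mem_subtype.symm⟩
    · rintro ⟨x, hx⟩
      rw [mem_codeAtom_iff'] at hx
      refine ⟨Finset.univ.filter (fun i => x ∈ U i),
        (hU _).2 ⟨x, (mem_codeAtom_iff' _ _ _).2 fun i => by simp⟩, ?_⟩
      ext i
      rw [Finset.mem_subtype, Finset.mem_filter]
      simp only [Finset.mem_univ, true_and]
      exact hx i
  · intro hD
    obtain ⟨d, V, ⟨hVopen, hV⟩, hVconv⟩ := hD
    rcases hj with htriv | ⟨-, σ, hjσ, htr⟩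
    · exact convex_of_restrict_aux C j V hVopen hVconv hV ∅ isOpen_empty (convex_empty)
        (fun _ => False) (fun x c' _ => by simp)
        (fun c hc => iff_of_false (htriv c hc) not_false)
    · have hk : ∀ c ∈ C, (j ∈ c ↔ σ ⊆ c) := by
        intro c hc
        have h1 := Set.ext_iff.mp htr c
        simp only [trunk, Set.mem_setOf_eq, hc, true_and, Finset.singleton_subset_iff] at h1
        exact h1
      refine convex_of_restrict_aux C j V hVopen hVconv hV
        (USet V (σ.subtype (· ∈ ({j}ᶜ : Finset (Fin n))))) ?_ ?_
        (fun c' => σ.subtype (· ∈ ({j}ᶜ : Finset (Fin n))) ⊆ c') ?_ ?_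
      · exact isOpen_biInter_finset (fun i _ => hVopen i)
      · exact convex_iInter fun i => convex_iInter fun _ => hVconv i
      · intro x c' h
        simp only [USet, Set.mem_iInter]
        exact ⟨fun hs i hi => (h i).1 (hs _ hi), fun hs i hi => (h i).2 (hs hi)⟩
      · intro c hc
        rw [hk c hc]
        constructor
        · intro hsc k hk'
          rw [Finset.mem_subtype] at hk' ⊢
          exact hsc hk'
        · intro hsc i hi
          have hiχ : i ∈ ({j}ᶜ : Finset (Fin n)) :=
            Finset.mem_compl.mpr (fun hm => hjσ (Finset.mem_singleton.mp hm ▸ hi))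
          exact Finset.mem_subtype.mp (hsc (Finset.mem_subtype.mpr hi : (⟨i, hiχ⟩ : _) ∈ _))
end
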